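/- Let θ_1,…,θ_n ∈ (0,π/2) with ∑_{i=1}^n θ_i = π. Then for every positive integer α, (∑_{i=1}^n sec θ_i)^{2α} − (n sec(π/n))^α (∑_{i=1}^n sec θ_i)^α ≥ (sec(π/n))^α [(∑_{i=1}^n sec θ_i)^α − (n sec(π/n))^α], with equality if and only if θ_1 = ⋯ = θ_n = π/n. -/

import Mathlib

open Real Set Finset in
lemma sec_strictConvexOn : StrictConvexOn ℝ (Set.Ioo (0:ℝ) (π/2)) (fun x => 1 / Real.cos x) := by
  constructor
  · exact convex_Ioo _ _
  · intro x hx y hy hxy a b ha hb hab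
    have hcx : 0 < Real.cos x := Real.cos_pos_of_mem_Ioo ⟨by linarith [hx.1, pi_pos], hx.2⟩
    have hcy : 0 < Real.cos y := Real.cos_pos_of_mem_Ioo ⟨by linarith [hy.1, pi_pos], hy.2⟩
    have hmemx : x ∈ Set.Icc (-(π/2)) (π/2) := ⟨by linarith [hx.1, pi_pos], hx.2.le⟩
    have hmemy : y ∈ Set.Icc (-(π/2)) (π/2) := ⟨by linarith [hy.1, pi_pos], hy.2.le⟩
    have hconc := strictConcaveOn_cos_Icc.2 hmemx hmemy hxy ha hb hab
    simp only [smul_eq_mul] at hconc ⊢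
    have hpos : 0 < a * Real.cos x + b * Real.cos y := by positivity
    have h1 : 1 / Real.cos (a * x + b * y) < 1 / (a * Real.cos x + b * Real.cos y) := by
      apply one_div_lt_one_div_of_lt hpos hconc
    have h2 : 1 / (a * Real.cos x + b * Real.cos y) ≤ a * (1 / Real.cos x) + b * (1 / Real.cos y) := by
      have hinv := (strictConvexOn_zpow (m := -1) (by norm_num) (by norm_num)).convexOn.2
        (Set.mem_Ioi.2 hcx) (Set.mem_Ioi.2 hcy) ha.le hb.le hab
      simpa [smul_eq_mul, zpow_neg, zpow_one, one_div] using hinv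
    linarith

open Real in
theorem stmt4 (n : ℕ) (hn : 3 ≤ n)
    (θ : Fin n → ℝ) (hθ : ∀ i, θ i ∈ Set.Ioo (0:ℝ) (π / 2))
    (hsum : ∑ i, θ i = π) (α : ℕ) (hα : 0 < α) :
    (1 / cos (π / n)) ^ α *
        ((∑ i, 1 / cos (θ i)) ^ α - ((n : ℝ) * (1 / cos (π / n))) ^ α)
      ≤ (∑ i, 1 / cos (θ i)) ^ (2 * α)
          - ((n : ℝ) * (1 / cos (π / n))) ^ α * (∑ i, 1 / cos (θ i)) ^ α
    ∧ ((∑ i, 1 / cos (θ i)) ^ (2 * α)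
          - ((n : ℝ) * (1 / cos (π / n))) ^ α * (∑ i, 1 / cos (θ i)) ^ α
        = (1 / cos (π / n)) ^ α *
            ((∑ i, 1 / cos (θ i)) ^ α - ((n : ℝ) * (1 / cos (π / n))) ^ α)
      ↔ ∀ i, θ i = π / n) := by
  have hn0 : (0:ℝ) < n := by positivity
  have hπn : π / n ∈ Set.Ioo (0:ℝ) (π/2) := by
    constructor
    · positivity
    · have h3 : π / (n:ℝ) ≤ π / 3 := by
        gcongr
        · exact_mod_cast hn
      linarith [pi_pos]
  have hcπ : 0 < cos (π / n) := Real.cos_pos_of_mem_Ioo ⟨by linarith [hπn.1, pi_pos], hπn.2⟩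
  set c : ℝ := 1 / cos (π / n) with hc
  set S : ℝ := ∑ i, 1 / cos (θ i) with hS
  have hcpos : 0 < c := by positivity
  -- weights
  have hw : ∑ _i : Fin n, (n:ℝ)⁻¹ = 1 := by
    simp [Finset.card_univ, mul_comm]
    field_simp
  have hcomb : ∑ i, (n:ℝ)⁻¹ • θ i = π / n := by
    rw [← Finset.smul_sum, hsum, smul_eq_mul, inv_mul_eq_div]
  -- Jensen
  have hjensen : c ≤ S / n := by
    have := sec_strictConvexOn.convexOn.map_sum_le (t := Finset.univ) (w := fun _ => (n:ℝ)⁻¹)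
      (p := θ) (fun i _ => by positivity) hw (fun i _ => hθ i)
    rw [hcomb] at this
    simpa [hc, hS, smul_eq_mul, ← Finset.mul_sum, div_eq_inv_mul] using this
  have hSN : (n:ℝ) * c ≤ S := by
    have := (le_div_iff₀ hn0).mp hjensen
    nlinarith
  have hScpos : 0 < S := lt_of_lt_of_le (by positivity) hSN
  have h1n : (1:ℝ) < n := by
    have : (3:ℝ) ≤ n := by exact_mod_cast hn
    linarith
  have hcS : c < S := lt_of_lt_of_le (by nlinarith) hSN
  have hNpos : 0 < (n:ℝ) * c := by positivity
  have hpowN : ((n:ℝ) * c) ^ α ≤ S ^ α := pow_le_pow_left₀ hNpos.le hSN α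
  have hpowc : c ^ α < S ^ α := pow_lt_pow_left₀ hcS hcpos.le hα.ne'
  have hfactor : S ^ (2*α) - ((n:ℝ)*c)^α * S^α - c^α * (S^α - ((n:ℝ)*c)^α)
      = (S^α - ((n:ℝ)*c)^α) * (S^α - c^α) := by ring
  constructor
  · nlinarith [mul_nonneg (sub_nonneg.mpr hpowN) (sub_nonneg.mpr hpowc.le)]
  · constructor
    · intro heq
      have hzero : (S^α - ((n:ℝ)*c)^α) * (S^α - c^α) = 0 := by linarith [hfactor]
      have h1 : S^α - ((n:ℝ)*c)^α = 0 := by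
        rcases mul_eq_zero.mp hzero with h | h
        · exact h
        · exact absurd h (by linarith [hpowc])
      have hSeq : S = (n:ℝ) * c := by
        by_contra hne
        have hlt : (n:ℝ) * c < S := lt_of_le_of_ne hSN (Ne.symm hne)
        have := pow_lt_pow_left₀ hlt hNpos.le hα.ne'
        linarith
      -- equality case of Jensen
      have halleq : ∀ j, ∀ k, θ j = θ k := by
        intro j k
        have := sec_strictConvexOn.eq_of_le_map_sum (t := Finset.univ)
          (w := fun _ => (n:ℝ)⁻¹) (p := θ) (fun i _ => by positivity) hw (fun i _ => hθ i) ?_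
        · exact this (Finset.mem_univ j) (Finset.mem_univ k)
        · rw [hcomb]
          have : ∑ i, (n:ℝ)⁻¹ • (1 / cos (θ i)) = S / n := by
            rw [← Finset.smul_sum]; simp [hS, smul_eq_mul, div_eq_inv_mul]
          rw [this, hSeq]
          field_simp
          exact (by rw [hc, one_div_mul_cancel hcπ.ne'] : c * cos (π / n) = 1).le
      intro i
      have : (n:ℝ) * θ i = π := by
        rw [← hsum]
        rw [Finset.sum_congr rfl (fun j _ => halleq j i)]
        simp [Finset.card_univ, mul_comm]
      field_simp
      linarith
    · intro hall
      have : S = (n:ℝ) * c := by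
        rw [hS, Finset.sum_congr rfl (fun j _ => by rw [hall j])]
        simp [hc, Finset.card_univ, mul_comm]
      rw [this]
      ring
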